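/- In the space X of nondecreasing functions from ω₂ to ω₁ + 1 (subspace of (ω₁+1)^{ω₂}), for each α < ω₂ the set A_α = { x ∈ X : x(α) = ω₁ } is a closed P-set in X. -/

import Mathlib

open Ordinal Cardinal

noncomputable section

def omega1 : Ordinal := (aleph 1).ord
def omega2 : Ordinal := (aleph 2).ord

abbrev Idx := {β : Ordinal // β < omega2}
abbrev Val := {γ : Ordinal // γ ≤ omega1}

instance : TopologicalSpace Val := Preorder.topology Val
instance : OrderTopology Val := ⟨rfl⟩

/-- The Kunen–van Mill–Mills space: nondecreasing functions from ω₂ to ω₁ + 1. -/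
def KvMM : Set (Idx → Val) := {x | ∀ a b : Idx, a ≤ b → x a ≤ x b}

/-- A set `L` is a P-set if every Gδ-set containing `L` is a neighbourhood of `L`. -/
def IsPSet {Y : Type*} [TopologicalSpace Y] (L : Set Y) : Prop :=
  ∀ G : Set Y, IsGδ G → L ⊆ G → L ⊆ interior G

/-- The top value ω₁ of the value space. -/
def wTop : Val := ⟨omega1, le_rfl⟩

/-- `A_α = { x ∈ X : x(α) = ω₁ }`, as a subset of the subspace `X = KvMM`. -/
def Aα (α : Idx) : Set KvMM := {x | (x : Idx → Val) α = wTop}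

/-! ### Auxiliary material -/

lemma omega1_isLimit : Order.IsSuccLimit omega1 := Cardinal.isSuccLimit_ord (aleph0_le_aleph 1)

lemma omega1_pos : (0 : Ordinal) < omega1 := omega1_isLimit.pos

instance : Inhabited ↥(Set.Iic omega1) := ⟨⟨0, Set.mem_Iic.mpr zero_le⟩⟩

instance : ConditionallyCompleteLinearOrder Val :=
  inferInstanceAs (ConditionallyCompleteLinearOrder ↥(Set.Iic omega1))

def wBot : Val := ⟨0, zero_le⟩

instance : CompactSpace Val := by
  refine ⟨?_⟩
  have h : (Set.univ : Set Val) = Set.Icc wBot wTop := by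
    ext v
    simp only [Set.mem_univ, Set.mem_Icc, true_iff]
    exact ⟨Subtype.coe_le_coe.mp zero_le, Subtype.coe_le_coe.mp v.2⟩
  rw [h]
  exact isCompact_Icc

lemma isClosed_KvMM : IsClosed KvMM := by
  have h : KvMM = ⋂ (a : Idx), ⋂ (b : Idx), ⋂ (_ : a ≤ b), {x : Idx → Val | x a ≤ x b} := by
    ext x; simp [KvMM]
  rw [h]
  exact isClosed_iInter fun a => isClosed_iInter fun b => isClosed_iInter fun _ =>
    isClosed_le (continuous_apply a) (continuous_apply b)

instance : CompactSpace KvMM := isCompact_iff_compactSpace.mp isClosed_KvMM.isCompact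

/-- Evaluation at a coordinate is continuous on the subspace. -/
lemma continuous_evalK (α : Idx) : Continuous (fun x : KvMM => (x : Idx → Val) α) :=
  (continuous_apply α).comp continuous_subtype_val

/-- Key lemma: any open set containing `A_α` contains a "tail" set
`{x : x(α) > δ}` for some `δ < ω₁`. -/
lemma exists_tail_subset (α : Idx) {U : Set KvMM} (hU : IsOpen U) (hA : Aα α ⊆ U) :
    ∃ δ : Ordinal, δ < omega1 ∧ ∀ x : KvMM, δ < ((x : Idx → Val) α).1 → x ∈ U := by
  by_contra h
  push_neg at h
  -- For every `δ < ω₁` there is `x ∉ U` with `x(α) > δ`.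
  set C : {δ : Ordinal // δ < omega1} → Set KvMM :=
    fun δ => ((fun x : KvMM => (x : Idx → Val) α) ⁻¹' Set.Ici (⟨δ.1, δ.2.le⟩ : Val)) ∩ Uᶜ with hC
  have hne : Nonempty {δ : Ordinal // δ < omega1} := ⟨⟨0, omega1_pos⟩⟩
  have hdir : Directed (· ⊇ ·) C := by
    intro δ₁ δ₂
    rcases le_total δ₁.1 δ₂.1 with hle | hle
    · exact ⟨δ₂, fun x hx => ⟨le_trans (Subtype.mk_le_mk.mpr hle) hx.1, hx.2⟩, fun x hx => hx⟩
    · exact ⟨δ₁, fun x hx => hx, fun x hx => ⟨le_trans (Subtype.mk_le_mk.mpr hle) hx.1, hx.2⟩⟩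
  have hnonempty : ∀ δ, (C δ).Nonempty := by
    intro δ
    obtain ⟨x, hxδ, hxU⟩ := h δ.1 δ.2
    exact ⟨x, Subtype.mk_le_mk.mpr hxδ.le, hxU⟩
  have hcl : ∀ δ, IsClosed (C δ) := fun δ =>
    (IsClosed.preimage (continuous_evalK α) isClosed_Ici).inter hU.isClosed_compl
  have hcpt : ∀ δ, IsCompact (C δ) := fun δ => (hcl δ).isCompact
  obtain ⟨x, hx⟩ :=
    IsCompact.nonempty_iInter_of_directed_nonempty_isCompact_isClosed C hdir hnonempty hcpt hcl
  simp only [Set.mem_iInter] at hx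
  have hxU : x ∉ U := (hx ⟨0, omega1_pos⟩).2
  have hxtop : ((x : Idx → Val) α) = wTop := by
    apply Subtype.ext
    refine le_antisymm ((x : Idx → Val) α).2 ?_
    by_contra hlt
    push_neg at hlt
    have hsucc : ((x : Idx → Val) α).1 + 1 < omega1 := omega1_isLimit.succ_lt hlt
    have := (hx ⟨((x : Idx → Val) α).1 + 1, hsucc⟩).1
    have h2 : ((x : Idx → Val) α).1 + 1 ≤ ((x : Idx → Val) α).1 := this
    exact absurd h2 (by simp)
  exact hxU (hA hxtop)

theorem Aα_isClosed_pset (α : Idx) : IsClosed (Aα α) ∧ IsPSet (Aα α) := by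
  constructor
  · -- `A_α` is the preimage of the closed set `{wTop} = Ici wTop`.
    have h : Aα α = (fun x : KvMM => (x : Idx → Val) α) ⁻¹' Set.Ici wTop := by
      ext x
      simp only [Aα, Set.mem_setOf_eq, Set.mem_preimage, Set.mem_Ici]
      constructor
      · intro hx; exact hx ▸ le_rfl
      · intro hx
        exact Subtype.ext (le_antisymm ((x : Idx → Val) α).2 hx)
    rw [h]
    exact IsClosed.preimage (continuous_evalK α) isClosed_Ici
  · intro G hG hsub
    obtain ⟨T, hTopen, hTct, rfl⟩ := hG
    -- for each open `t ∈ T`, get the bound `δ_t < ω₁`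
    have hkey : ∀ t : T, ∃ δ : Ordinal, δ < omega1 ∧
        ∀ x : KvMM, δ < ((x : Idx → Val) α).1 → x ∈ (t : Set KvMM) := by
      intro t
      exact exists_tail_subset α (hTopen t t.2)
        (fun x hx => Set.sInter_subset_of_mem t.2 (hsub hx))
    rcases T.eq_empty_or_nonempty with rfl | hTne
    · simp only [Set.sInter_empty, interior_univ]
      exact fun x _ => trivial
    choose δf hδf hδf2 using hkey
    have hct : Countable T := hTct.to_subtype
    have hne : Nonempty ↑T := hTne.to_subtype
    obtain ⟨g, hg⟩ := exists_surjective_nat ↑T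
    set F : ℕ → Ordinal := fun n => δf (g n) with hF
    have hcard : Cardinal.lift #ℕ < omega1.cof := by
      have hcof : omega1.cof = aleph 1 := Cardinal.isRegular_aleph_one.cof_eq
      rw [hcof, Cardinal.mk_nat, Cardinal.lift_aleph0]
      exact Cardinal.aleph0_lt_aleph_one
    have hsup : iSup F < omega1 :=
      Ordinal.iSup_lt_ord_lift (f := F) hcard (fun n => hδf (g n))
    set δ : Ordinal := iSup F with hδ
    set V : Set KvMM :=
      (fun x : KvMM => (x : Idx → Val) α) ⁻¹' Set.Ioi (⟨δ, hsup.le⟩ : Val) with hV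
    have hVopen : IsOpen V := (isOpen_Ioi).preimage (continuous_evalK α)
    have hVsub : V ⊆ ⋂₀ T := by
      intro x hx
      rw [Set.mem_sInter]
      intro t ht
      refine hδf2 ⟨t, ht⟩ x ?_
      obtain ⟨n, hn⟩ := hg ⟨t, ht⟩
      have h1 : δf ⟨t, ht⟩ ≤ δ := hn ▸ Ordinal.le_iSup F n
      exact lt_of_le_of_lt h1 hx
    have hAV : Aα α ⊆ V := by
      intro x hx
      have : ((x : Idx → Val) α) = wTop := hx
      simp only [hV, Set.mem_preimage, Set.mem_Ioi, this]
      exact Subtype.mk_lt_mk.mpr hsup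
    exact fun x hx => interior_maximal hVsub hVopen (hAV hx)

end
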